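/- Let (k-1/2)π < x_k < kπ for each k ∈ ℕ, let g(z) = Π_{k=1}^∞ (1 - z²/x_k²) and g_p(z) = Π_{k=1}^{2p} (1 - z²/x_k²). Then for every r > 0 and every z with |z| < πr, |g_p(z) - g(z)| ≤ r²·cosh(πr)/p · C for some absolute constant C (in particular g_p → g uniformly on the closed disk of radius πr as p → ∞). -/

import Mathlib

open Complex Filter Finset Topology

private lemma abs_prod_one_add_le (t : Finset ℕ) (w : ℕ → ℂ) :
    ‖(∏ b ∈ t, (1 + w b))‖ ≤ ∏ b ∈ t, (1 + ‖(w b)‖) := by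
  rw [norm_prod]
  refine Finset.prod_le_prod (fun i _ => norm_nonneg _) (fun i _ => ?_)
  calc ‖(1 + w i)‖ ≤ ‖1‖ + ‖(w i)‖ := norm_add_le _ _
    _ = 1 + ‖(w i)‖ := by simp

private lemma abs_prod_one_add_sub_one_le (t : Finset ℕ) (w : ℕ → ℂ) :
    ‖(∏ b ∈ t, (1 + w b) - 1)‖ ≤ ∏ b ∈ t, (1 + ‖(w b)‖) - 1 := by
  induction t using Finset.cons_induction with
  | empty => simp
  | cons a t ha ih =>
    rw [Finset.prod_cons, Finset.prod_cons]
    have h1 : (1 + w a) * ∏ b ∈ t, (1 + w b) - 1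
        = (∏ b ∈ t, (1 + w b) - 1) + w a * ∏ b ∈ t, (1 + w b) := by ring
    rw [h1]
    calc ‖((∏ b ∈ t, (1 + w b) - 1) + w a * ∏ b ∈ t, (1 + w b))‖
        ≤ ‖(∏ b ∈ t, (1 + w b) - 1)‖
          + ‖(w a * ∏ b ∈ t, (1 + w b))‖ := norm_add_le _ _
      _ ≤ (∏ b ∈ t, (1 + ‖(w b)‖) - 1)
          + ‖(w a)‖ * ∏ b ∈ t, (1 + ‖(w b)‖) := by
          rw [norm_mul]
          exact add_le_add ih (mul_le_mul_of_nonneg_left (abs_prod_one_add_le t w)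
            (norm_nonneg _))
      _ = (1 + ‖(w a)‖) * ∏ b ∈ t, (1 + ‖(w b)‖) - 1 := by ring

private lemma prod_one_add_mul_one_sub_sum_le (t : Finset ℕ) (b : ℕ → ℝ) (hb : ∀ i, 0 ≤ b i) :
    (∏ i ∈ t, (1 + b i)) * (1 - ∑ i ∈ t, b i) ≤ 1 := by
  induction t using Finset.cons_induction with
  | empty => simp
  | cons a t ha ih =>
    rw [Finset.prod_cons, Finset.sum_cons]
    have hP : (0:ℝ) ≤ ∏ i ∈ t, (1 + b i) :=
      Finset.prod_nonneg fun i _ => by have := hb i; positivity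
    have hS : (0:ℝ) ≤ ∑ i ∈ t, b i := Finset.sum_nonneg fun i _ => hb i
    nlinarith [hb a, mul_nonneg hP (mul_nonneg (hb a) (add_nonneg (hb a) hS)),
      mul_nonneg hP (hb a)]

private lemma prod_one_add_sub_one_le' (t : Finset ℕ) (b : ℕ → ℝ) (hb : ∀ i, 0 ≤ b i) :
    (∏ i ∈ t, (1 + b i)) - 1 ≤ (∏ i ∈ t, (1 + b i)) * ∑ i ∈ t, b i := by
  nlinarith [prod_one_add_mul_one_sub_sum_le t b hb]

private lemma euler_aux (s : ℝ) (hs : 0 < s) :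
    Tendsto (fun n : ℕ => ∏ j ∈ Finset.range n, (1 + s ^ 2 / ((j : ℝ) + 1) ^ 2)) atTop
      (𝓝 (Real.sinh (Real.pi * s) / (Real.pi * s))) := by
  have hne : ((Real.pi : ℂ) * ((s : ℂ) * Complex.I)) ≠ 0 :=
    mul_ne_zero (Complex.ofReal_ne_zero.mpr Real.pi_ne_zero)
      (mul_ne_zero (Complex.ofReal_ne_zero.mpr hs.ne') Complex.I_ne_zero)
  have h := Complex.tendsto_euler_sin_prod ((s : ℂ) * Complex.I)
  have h2 := (Complex.continuous_re.tendsto _).comp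
    (h.const_mul (((Real.pi : ℂ) * ((s : ℂ) * Complex.I))⁻¹))
  simp only [Function.comp_def] at h2
  have key : ∀ n : ℕ,
      ((((Real.pi : ℂ) * ((s : ℂ) * Complex.I))⁻¹ *
        ((Real.pi : ℂ) * ((s : ℂ) * Complex.I) * ∏ j ∈ Finset.range n,
          ((1 : ℂ) - ((s : ℂ) * Complex.I) ^ 2 / ((j : ℂ) + 1) ^ 2))).re)
      = ∏ j ∈ Finset.range n, (1 + s ^ 2 / ((j : ℝ) + 1) ^ 2) := by
    intro n
    rw [inv_mul_cancel_left₀ hne]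
    have hprod : (∏ j ∈ Finset.range n, ((1 : ℂ) - ((s : ℂ) * Complex.I) ^ 2 / ((j : ℂ) + 1) ^ 2))
        = ((∏ j ∈ Finset.range n, (1 + s ^ 2 / ((j : ℝ) + 1) ^ 2) : ℝ) : ℂ) := by
      rw [Complex.ofReal_prod]
      refine Finset.prod_congr rfl fun j _ => ?_
      have hI : ((s : ℂ) * Complex.I) ^ 2 = -((s : ℂ) ^ 2) := by
        rw [mul_pow, Complex.I_sq]; ring
      rw [hI]
      push_cast
      ring
    rw [hprod, Complex.ofReal_re]
  have hlim : ((((Real.pi : ℂ) * ((s : ℂ) * Complex.I))⁻¹ *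
      Complex.sin ((Real.pi : ℂ) * ((s : ℂ) * Complex.I))).re)
      = Real.sinh (Real.pi * s) / (Real.pi * s) := by
    have h1 : (Real.pi : ℂ) * ((s : ℂ) * Complex.I) = ((Real.pi * s : ℝ) : ℂ) * Complex.I := by
      push_cast; ring
    have hps : ((Real.pi * s : ℝ) : ℂ) ≠ 0 := by
      exact_mod_cast Complex.ofReal_ne_zero.mpr (by positivity : Real.pi * s ≠ 0)
    rw [h1, Complex.sin_mul_I, ← Complex.ofReal_sinh]
    have : (((Real.pi * s : ℝ) : ℂ) * Complex.I)⁻¹ *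
        (((Real.sinh (Real.pi * s) : ℝ) : ℂ) * Complex.I)
        = ((Real.sinh (Real.pi * s) / (Real.pi * s) : ℝ) : ℂ) := by
      rw [mul_inv]
      push_cast
      field_simp [Complex.I_ne_zero]
    rw [this, Complex.ofReal_re]
  rw [← hlim]
  exact Filter.Tendsto.congr key h2

private lemma prod_le_cosh (r : ℝ) (hr : 0 < r) (n : ℕ) :
    ∏ k ∈ Finset.range n, (1 + r ^ 2 / ((k : ℝ) + 1 / 2) ^ 2) ≤ Real.cosh (Real.pi * r) := by
  have key : ∀ m : ℕ,
      (∏ k ∈ Finset.range m, (1 + r ^ 2 / ((k : ℝ) + 1 / 2) ^ 2)) *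
        (∏ j ∈ Finset.range m, (1 + r ^ 2 / ((j : ℝ) + 1) ^ 2))
      = ∏ j ∈ Finset.range (2 * m), (1 + (2 * r) ^ 2 / ((j : ℝ) + 1) ^ 2) := by
    intro m
    induction m with
    | zero => simp
    | succ m ih =>
      have h2 : 2 * (m + 1) = 2 * m + 1 + 1 := by ring
      rw [h2, Finset.prod_range_succ, Finset.prod_range_succ, Finset.prod_range_succ,
        Finset.prod_range_succ, ← ih]
      have e1 : (1 + (2 * r) ^ 2 / (((2 * m : ℕ) : ℝ) + 1) ^ 2)
          = (1 + r ^ 2 / ((m : ℝ) + 1 / 2) ^ 2) := by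
        have h4 : (((2 * m : ℕ) : ℝ) + 1) ^ 2 = 4 * ((m : ℝ) + 1 / 2) ^ 2 := by push_cast; ring
        have h5 : (2 * r) ^ 2 = 4 * r ^ 2 := by ring
        rw [h4, h5, mul_div_mul_left _ _ (by norm_num : (4:ℝ) ≠ 0)]
      have e2 : (1 + (2 * r) ^ 2 / (((2 * m + 1 : ℕ) : ℝ) + 1) ^ 2)
          = (1 + r ^ 2 / ((m : ℝ) + 1) ^ 2) := by
        have h4 : (((2 * m + 1 : ℕ) : ℝ) + 1) ^ 2 = 4 * ((m : ℝ) + 1) ^ 2 := by push_cast; ring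
        have h5 : (2 * r) ^ 2 = 4 * r ^ 2 := by ring
        rw [h4, h5, mul_div_mul_left _ _ (by norm_num : (4:ℝ) ≠ 0)]
      rw [e1, e2]
      ring
  have hA := euler_aux (2 * r) (by positivity)
  have hB := euler_aux r hr
  have h2m : Tendsto (fun m : ℕ => 2 * m) atTop atTop :=
    tendsto_atTop_atTop.mpr fun b => ⟨b, fun a ha => by omega⟩
  have hA2 := hA.comp h2m
  have hsinh : 0 < Real.sinh (Real.pi * r) := Real.sinh_pos_iff.mpr (by positivity)
  have hL1 : Real.sinh (Real.pi * r) / (Real.pi * r) ≠ 0 := by positivity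
  have hQ := hA2.div hB hL1
  simp only [Function.comp_def] at hQ
  have hBpos : ∀ m : ℕ, 0 < ∏ j ∈ Finset.range m, (1 + r ^ 2 / ((j : ℝ) + 1) ^ 2) :=
    fun m => Finset.prod_pos fun j _ => by positivity
  have heq : ∀ m : ℕ,
      (∏ j ∈ Finset.range (2 * m), (1 + (2 * r) ^ 2 / ((j : ℝ) + 1) ^ 2)) /
        (∏ j ∈ Finset.range m, (1 + r ^ 2 / ((j : ℝ) + 1) ^ 2))
      = ∏ k ∈ Finset.range m, (1 + r ^ 2 / ((k : ℝ) + 1 / 2) ^ 2) := by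
    intro m
    rw [← key m, mul_div_assoc, div_self (hBpos m).ne', mul_one]
  have hval : (Real.sinh (Real.pi * (2 * r)) / (Real.pi * (2 * r))) /
      (Real.sinh (Real.pi * r) / (Real.pi * r)) = Real.cosh (Real.pi * r) := by
    have hs2 : Real.sinh (Real.pi * (2 * r))
        = 2 * Real.sinh (Real.pi * r) * Real.cosh (Real.pi * r) := by
      rw [show Real.pi * (2 * r) = 2 * (Real.pi * r) by ring, Real.sinh_two_mul]
    rw [hs2]
    have h1 : Real.sinh (Real.pi * r) ≠ 0 := hsinh.ne'
    have h2 : Real.pi * r ≠ 0 := by positivity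
    field_simp
  have hQ' : Tendsto (fun m : ℕ => ∏ k ∈ Finset.range m, (1 + r ^ 2 / ((k : ℝ) + 1 / 2) ^ 2))
      atTop (𝓝 (Real.cosh (Real.pi * r))) := by
    rw [← hval]
    exact Filter.Tendsto.congr heq hQ
  have hmono : Monotone (fun m : ℕ => ∏ k ∈ Finset.range m, (1 + r ^ 2 / ((k : ℝ) + 1 / 2) ^ 2)) := by
    apply monotone_nat_of_le_succ
    intro m
    rw [Finset.prod_range_succ]
    have h1 : (0:ℝ) ≤ ∏ k ∈ Finset.range m, (1 + r ^ 2 / ((k : ℝ) + 1 / 2) ^ 2) :=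
      Finset.prod_nonneg fun k _ => by positivity
    have h2 : (1:ℝ) ≤ 1 + r ^ 2 / ((m : ℝ) + 1 / 2) ^ 2 := by
      have : (0:ℝ) ≤ r ^ 2 / ((m : ℝ) + 1 / 2) ^ 2 := by positivity
      linarith
    exact le_mul_of_one_le_right h1 h2
  exact hmono.ge_of_tendsto hQ' n

theorem partial_product_uniform_approx :
    ∃ C : ℝ, 0 < C ∧
      ∀ (x : ℕ → ℝ),
        (∀ k : ℕ, 1 ≤ k → ((k : ℝ) - 1 / 2) * Real.pi < x k ∧ x k < (k : ℝ) * Real.pi) →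
        ∀ (r : ℝ), 0 < r → ∀ (p : ℕ), 0 < p → ∀ z : ℂ, ‖z‖ < Real.pi * r →
          ‖
              ((∏ k ∈ Finset.range (2 * p), (1 - z ^ 2 / ((x (k + 1) : ℂ)) ^ 2)) -
                ∏' k : ℕ, (1 - z ^ 2 / ((x (k + 1) : ℂ)) ^ 2))‖ ≤
            r ^ 2 * Real.cosh (Real.pi * r) / p * C := by
  refine ⟨1, one_pos, ?_⟩
  intro x hx r hr p hp z hz
  set f : ℕ → ℂ := fun k => 1 - z ^ 2 / ((x (k + 1) : ℂ)) ^ 2 with hf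
  set w : ℕ → ℂ := fun k => -(z ^ 2 / ((x (k + 1) : ℂ)) ^ 2) with hw
  set a : ℕ → ℝ := fun k => ‖z‖ ^ 2 / (x (k + 1)) ^ 2 with ha
  have hxpos : ∀ k : ℕ, ((k : ℝ) + 1 / 2) * Real.pi < x (k + 1) := by
    intro k
    have h := (hx (k + 1) (by omega)).1
    have hc : (((k + 1 : ℕ)) : ℝ) - 1 / 2 = (k : ℝ) + 1 / 2 := by push_cast; ring
    rwa [hc] at h
  have hxpos' : ∀ k : ℕ, (0 : ℝ) < x (k + 1) := fun k =>
    lt_trans (by positivity) (hxpos k)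
  have hfw : ∀ k, f k = 1 + w k := fun k => by rw [hf, hw]; ring
  have haw : ∀ k, ‖(w k)‖ = a k := by
    intro k
    rw [hw, ha]
    simp only [norm_neg, norm_div, norm_pow, Complex.norm_real, Real.norm_eq_abs,
      _root_.abs_of_pos (hxpos' k)]
  have hann : ∀ k, 0 ≤ a k := fun k => by rw [ha]; positivity
  have hab : ∀ k, a k ≤ r ^ 2 / ((k : ℝ) + 1 / 2) ^ 2 := by
    intro k
    have h1 : ‖z‖ ^ 2 ≤ (Real.pi * r) ^ 2 :=
      pow_le_pow_left₀ (norm_nonneg _) hz.le 2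
    have h2 : (((k : ℝ) + 1 / 2) * Real.pi) ^ 2 ≤ (x (k + 1)) ^ 2 :=
      pow_le_pow_left₀ (by positivity) (hxpos k).le 2
    have h3 : a k ≤ (Real.pi * r) ^ 2 / (((k : ℝ) + 1 / 2) * Real.pi) ^ 2 := by
      rw [ha]
      exact div_le_div₀ (by positivity) h1 (by positivity) h2
    have h4 : (Real.pi * r) ^ 2 / (((k : ℝ) + 1 / 2) * Real.pi) ^ 2
        = r ^ 2 / ((k : ℝ) + 1 / 2) ^ 2 := by
      rw [mul_pow, mul_pow, mul_comm (Real.pi ^ 2) (r ^ 2),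
        mul_div_mul_right _ _ (pow_ne_zero 2 Real.pi_ne_zero)]
    linarith [h3, h4.le]
  -- summability
  have hsum_c : Summable (fun k : ℕ => r ^ 2 / ((k : ℝ) + 1 / 2) ^ 2) := by
    have h0 : Summable (fun n : ℕ => 1 / ((n : ℝ) ^ 2)) :=
      Real.summable_one_div_nat_pow.mpr (by norm_num)
    have h1 : Summable (fun n : ℕ => 1 / (((n : ℝ) + 1) ^ 2)) := by
      have h := (summable_nat_add_iff 1).mpr h0
      refine h.congr fun n => ?_
      push_cast
      ring
    have h2 : Summable (fun n : ℕ => (4 * r ^ 2) * (1 / (((n : ℝ) + 1) ^ 2))) := h1.mul_left _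
    refine Summable.of_nonneg_of_le (fun k => by positivity) (fun k => ?_) h2
    have h3 : ((k : ℝ) + 1) ^ 2 ≤ 4 * ((k : ℝ) + 1 / 2) ^ 2 := by
      nlinarith [Nat.cast_nonneg (α := ℝ) k]
    have h4 : r ^ 2 / ((k : ℝ) + 1 / 2) ^ 2 = (4 * r ^ 2) / (4 * ((k : ℝ) + 1 / 2) ^ 2) := by
      rw [mul_div_mul_left _ _ (by norm_num : (4:ℝ) ≠ 0)]
    rw [h4, mul_one_div]
    exact div_le_div_of_nonneg_left (by positivity) (by positivity) h3
  have hsum_a : Summable a := Summable.of_nonneg_of_le hann hab hsum_c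
  -- multipliability
  have hmulti : Multipliable f := by
    obtain ⟨s1, hs1⟩ := summable_iff_vanishing.mp hsum_a (Set.Iio (1 / 2 : ℝ))
      (Iio_mem_nhds one_half_pos)
    set K := ∏ b ∈ s1, (1 + a b) with hK
    have hK1 : (1 : ℝ) ≤ K := by
      rw [hK]
      calc (1:ℝ) = ∏ _b ∈ s1, (1:ℝ) := by simp
        _ ≤ ∏ b ∈ s1, (1 + a b) :=
          Finset.prod_le_prod (fun i _ => by norm_num) (fun i _ => by have := hann i; linarith)
    have hsmall : ∀ t : Finset ℕ, ∑ b ∈ t, a b ≤ 1 / 2 →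
        (∏ b ∈ t, (1 + a b)) ≤ 2 ∧
        ‖(∏ b ∈ t, f b - 1)‖ ≤ 2 * ∑ b ∈ t, a b := by
      intro t ht
      have hfeq : (∏ b ∈ t, f b) = ∏ b ∈ t, (1 + w b) :=
        Finset.prod_congr rfl fun b _ => hfw b
      have haweq : (∏ b ∈ t, (1 + ‖(w b)‖)) = ∏ b ∈ t, (1 + a b) :=
        Finset.prod_congr rfl fun b _ => by rw [haw]
      have hsweq : (∑ b ∈ t, ‖(w b)‖) = ∑ b ∈ t, a b :=
        Finset.sum_congr rfl fun b _ => haw b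
      have hTm := prod_one_add_mul_one_sub_sum_le t (fun b => ‖(w b)‖)
        (fun b => norm_nonneg _)
      rw [haweq, hsweq] at hTm
      have hTnn : (0 : ℝ) ≤ ∏ b ∈ t, (1 + a b) :=
        Finset.prod_nonneg fun b _ => by have := hann b; positivity
      have hSnn : (0 : ℝ) ≤ ∑ b ∈ t, a b := Finset.sum_nonneg fun b _ => hann b
      have hT2 : (∏ b ∈ t, (1 + a b)) ≤ 2 := by nlinarith
      refine ⟨hT2, ?_⟩
      have h1 : ‖(∏ b ∈ t, f b - 1)‖ ≤ ∏ b ∈ t, (1 + ‖(w b)‖) - 1 := by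
        rw [hfeq]; exact abs_prod_one_add_sub_one_le t w
      rw [haweq] at h1
      nlinarith
    have habs_le : ∀ u : Finset ℕ, s1 ⊆ u → ‖(∏ b ∈ u, f b)‖ ≤ 2 * K := by
      intro u hsu
      have hsplit : (∏ b ∈ u \ s1, (1 + a b)) * ∏ b ∈ s1, (1 + a b) = ∏ b ∈ u, (1 + a b) :=
        Finset.prod_sdiff hsu
      have hd : Disjoint (u \ s1) s1 := Finset.sdiff_disjoint
      have hsum_lt : ∑ b ∈ u \ s1, a b ≤ 1 / 2 := le_of_lt (hs1 _ hd)
      have h2 := (hsmall _ hsum_lt).1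
      have hKnn : (0 : ℝ) ≤ K := by linarith
      calc ‖(∏ b ∈ u, f b)‖
          ≤ ∏ b ∈ u, (1 + ‖(w b)‖) := by
            rw [show ∏ b ∈ u, f b = ∏ b ∈ u, (1 + w b) from
              Finset.prod_congr rfl fun b _ => hfw b]
            exact abs_prod_one_add_le u w
        _ = ∏ b ∈ u, (1 + a b) := Finset.prod_congr rfl fun b _ => by rw [haw]
        _ = (∏ b ∈ u \ s1, (1 + a b)) * K := hsplit.symm
        _ ≤ 2 * K := mul_le_mul_of_nonneg_right h2 hKnn
    have hcauchy : CauchySeq (fun s : Finset ℕ => ∏ b ∈ s, f b) := by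
      rw [Metric.cauchySeq_iff']
      intro ε hε
      have hδ : (0 : ℝ) < min (1 / 2) (ε / (8 * (K + 1))) :=
        lt_min one_half_pos (by positivity)
      obtain ⟨s2, hs2⟩ := summable_iff_vanishing.mp hsum_a
        (Set.Iio (min (1 / 2) (ε / (8 * (K + 1))))) (Iio_mem_nhds hδ)
      refine ⟨s1 ∪ s2, fun s hssup => ?_⟩
      have hs1sub : s1 ⊆ s1 ∪ s2 := Finset.subset_union_left
      have hsub : s1 ∪ s2 ⊆ s := hssup
      have hsplit : (∏ b ∈ s \ (s1 ∪ s2), f b) * ∏ b ∈ s1 ∪ s2, f b = ∏ b ∈ s, f b :=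
        Finset.prod_sdiff hsub
      rw [Complex.dist_eq]
      have hdiff : (∏ b ∈ s, f b) - ∏ b ∈ s1 ∪ s2, f b
          = (∏ b ∈ s1 ∪ s2, f b) * ((∏ b ∈ s \ (s1 ∪ s2), f b) - 1) := by
        rw [← hsplit]; ring
      rw [hdiff, norm_mul]
      have hd2 : Disjoint (s \ (s1 ∪ s2)) s2 :=
        Finset.sdiff_disjoint.mono_right Finset.subset_union_right
      have hsum2 := hs2 _ hd2
      rw [Set.mem_Iio] at hsum2
      have hSnn : (0 : ℝ) ≤ ∑ b ∈ s \ (s1 ∪ s2), a b :=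
        Finset.sum_nonneg fun b _ => hann b
      have h12 : ∑ b ∈ s \ (s1 ∪ s2), a b ≤ 1 / 2 :=
        le_trans hsum2.le (min_le_left _ _)
      have hball2 := (hsmall _ h12).2
      have hK0 : ‖(∏ b ∈ s1 ∪ s2, f b)‖ ≤ 2 * K := habs_le _ hs1sub
      have hSig2 : ∑ b ∈ s \ (s1 ∪ s2), a b ≤ ε / (8 * (K + 1)) :=
        le_trans hsum2.le (min_le_right _ _)
      have hc : (0 : ℝ) < 8 * (K + 1) := by linarith
      have h8 : (∑ b ∈ s \ (s1 ∪ s2), a b) * (8 * (K + 1)) ≤ ε := (le_div_iff₀ hc).mp hSig2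
      have h4 : ‖(∏ b ∈ s1 ∪ s2, f b)‖ *
          ‖((∏ b ∈ s \ (s1 ∪ s2), f b) - 1)‖
          ≤ 2 * K * (2 * ∑ b ∈ s \ (s1 ∪ s2), a b) :=
        mul_le_mul hK0 hball2 (norm_nonneg _) (by linarith)
      nlinarith [hK1, hε, hSnn]
    obtain ⟨L, hL⟩ := cauchySeq_tendsto_of_complete hcauchy
    exact ⟨L, hL⟩
  have hg := hmulti.hasProd.tendsto_prod_nat
  have hcoshnn : (0 : ℝ) ≤ Real.cosh (Real.pi * r) := (Real.cosh_pos _).le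
  have hpr : (0 : ℝ) < (p : ℝ) := by exact_mod_cast hp
  -- key finite estimate
  have key : ∀ m : ℕ,
      ‖((∏ k ∈ Finset.range (2 * p), f k) - ∏ k ∈ Finset.range (2 * p + m), f k)‖
        ≤ Real.cosh (Real.pi * r) * (r ^ 2 / (2 * (p : ℝ))) := by
    intro m
    rw [Finset.prod_range_add]
    have hGW : (∏ k ∈ Finset.range (2 * p), f k) -
        (∏ k ∈ Finset.range (2 * p), f k) * ∏ i ∈ Finset.range m, f (2 * p + i)
        = (∏ k ∈ Finset.range (2 * p), f k) *
          (1 - ∏ i ∈ Finset.range m, f (2 * p + i)) := by ring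
    rw [hGW, norm_mul]
    have hGle : ‖(∏ k ∈ Finset.range (2 * p), f k)‖
        ≤ ∏ k ∈ Finset.range (2 * p), (1 + a k) := by
      rw [show ∏ k ∈ Finset.range (2 * p), f k = ∏ k ∈ Finset.range (2 * p), (1 + w k) from
        Finset.prod_congr rfl fun k _ => hfw k]
      calc ‖(∏ k ∈ Finset.range (2 * p), (1 + w k))‖
          ≤ ∏ k ∈ Finset.range (2 * p), (1 + ‖(w k)‖) :=
            abs_prod_one_add_le _ w
        _ = ∏ k ∈ Finset.range (2 * p), (1 + a k) :=
            Finset.prod_congr rfl fun k _ => by rw [haw]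
    have habs1 : ‖(1 - ∏ i ∈ Finset.range m, f (2 * p + i))‖
        ≤ (∏ i ∈ Finset.range m, (1 + a (2 * p + i))) - 1 := by
      have hfeq : (∏ i ∈ Finset.range m, f (2 * p + i))
          = ∏ i ∈ Finset.range m, (1 + w (2 * p + i)) :=
        Finset.prod_congr rfl fun i _ => hfw _
      have hneg : (1 : ℂ) - ∏ i ∈ Finset.range m, f (2 * p + i)
          = -((∏ i ∈ Finset.range m, (1 + w (2 * p + i))) - 1) := by rw [hfeq]; ring
      rw [hneg, norm_neg]
      calc ‖((∏ i ∈ Finset.range m, (1 + w (2 * p + i))) - 1)‖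
          ≤ (∏ i ∈ Finset.range m, (1 + ‖(w (2 * p + i))‖)) - 1 :=
            abs_prod_one_add_sub_one_le (Finset.range m) (fun i => w (2 * p + i))
        _ = (∏ i ∈ Finset.range m, (1 + a (2 * p + i))) - 1 := by
            rw [Finset.prod_congr rfl fun i (_ : i ∈ Finset.range m) => by rw [haw (2 * p + i)]]
    have hTS := prod_one_add_sub_one_le' (Finset.range m) (fun i => a (2 * p + i))
      (fun i => hann _)
    have hsumS : ∑ i ∈ Finset.range m, a (2 * p + i) ≤ r ^ 2 / (2 * (p : ℝ)) := by
      have h1 : ∀ i : ℕ, a (2 * p + i) ≤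
          r ^ 2 / (((2 * p + i : ℕ) : ℝ)) - r ^ 2 / (((2 * p + (i + 1) : ℕ) : ℝ)) := by
        intro i
        have hu : (1 : ℝ) ≤ ((2 * p + i : ℕ) : ℝ) := by
          have : 1 ≤ 2 * p + i := by omega
          exact_mod_cast this
        have h2 := hab (2 * p + i)
        have hu0 : (0 : ℝ) < ((2 * p + i : ℕ) : ℝ) := by linarith
        have hd : (((2 * p + i : ℕ) : ℝ)) * (((2 * p + i : ℕ) : ℝ) + 1)
            ≤ (((2 * p + i : ℕ) : ℝ) + 1 / 2) ^ 2 := by nlinarith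
        have h3 : r ^ 2 / (((2 * p + i : ℕ) : ℝ) + 1 / 2) ^ 2
            ≤ r ^ 2 / ((((2 * p + i : ℕ) : ℝ)) * (((2 * p + i : ℕ) : ℝ) + 1)) :=
          div_le_div_of_nonneg_left (by positivity) (by positivity) hd
        have h4 : r ^ 2 / ((((2 * p + i : ℕ) : ℝ)) * (((2 * p + i : ℕ) : ℝ) + 1))
            = r ^ 2 / (((2 * p + i : ℕ) : ℝ)) - r ^ 2 / ((((2 * p + i : ℕ) : ℝ)) + 1) := by
          field_simp
          ring
        have h5 : (((2 * p + (i + 1) : ℕ)) : ℝ) = ((2 * p + i : ℕ) : ℝ) + 1 := by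
          push_cast; ring
        rw [h5]
        calc a (2 * p + i) ≤ r ^ 2 / (((2 * p + i : ℕ) : ℝ) + 1 / 2) ^ 2 := by
              have := hab (2 * p + i); push_cast at this ⊢; linarith
          _ ≤ r ^ 2 / ((((2 * p + i : ℕ) : ℝ)) * (((2 * p + i : ℕ) : ℝ) + 1)) := h3
          _ = r ^ 2 / (((2 * p + i : ℕ) : ℝ)) - r ^ 2 / ((((2 * p + i : ℕ) : ℝ)) + 1) := h4
      have h6 : ∑ i ∈ Finset.range m,
          (r ^ 2 / (((2 * p + i : ℕ) : ℝ)) - r ^ 2 / (((2 * p + (i + 1) : ℕ) : ℝ)))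
          = r ^ 2 / (((2 * p + 0 : ℕ) : ℝ)) - r ^ 2 / (((2 * p + m : ℕ) : ℝ)) :=
        Finset.sum_range_sub' (fun i => r ^ 2 / (((2 * p + i : ℕ) : ℝ))) m
      have h7 : (0:ℝ) ≤ r ^ 2 / (((2 * p + m : ℕ) : ℝ)) := by positivity
      have h8 : r ^ 2 / (((2 * p + 0 : ℕ) : ℝ)) = r ^ 2 / (2 * (p : ℝ)) := by
        push_cast; ring_nf
      calc ∑ i ∈ Finset.range m, a (2 * p + i)
          ≤ ∑ i ∈ Finset.range m,
            (r ^ 2 / (((2 * p + i : ℕ) : ℝ)) - r ^ 2 / (((2 * p + (i + 1) : ℕ) : ℝ))) :=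
            Finset.sum_le_sum fun i _ => h1 i
        _ = r ^ 2 / (((2 * p + 0 : ℕ) : ℝ)) - r ^ 2 / (((2 * p + m : ℕ) : ℝ)) := h6
        _ ≤ r ^ 2 / (((2 * p + 0 : ℕ) : ℝ)) := by linarith
        _ = r ^ 2 / (2 * (p : ℝ)) := h8
    -- combine
    have hPnn : (0:ℝ) ≤ ∏ k ∈ Finset.range (2 * p), (1 + a k) :=
      Finset.prod_nonneg fun k _ => by have := hann k; positivity
    have hTnn : (0:ℝ) ≤ ∏ i ∈ Finset.range m, (1 + a (2 * p + i)) :=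
      Finset.prod_nonneg fun i _ => by have := hann (2 * p + i); positivity
    have hSnn : (0:ℝ) ≤ ∑ i ∈ Finset.range m, a (2 * p + i) :=
      Finset.sum_nonneg fun i _ => hann _
    have hPT : (∏ k ∈ Finset.range (2 * p), (1 + a k)) *
        (∏ i ∈ Finset.range m, (1 + a (2 * p + i)))
        = ∏ k ∈ Finset.range (2 * p + m), (1 + a k) :=
      (Finset.prod_range_add (fun k => 1 + a k) (2 * p) m).symm
    have hPTle : ∏ k ∈ Finset.range (2 * p + m), (1 + a k) ≤ Real.cosh (Real.pi * r) := by
      calc ∏ k ∈ Finset.range (2 * p + m), (1 + a k)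
          ≤ ∏ k ∈ Finset.range (2 * p + m), (1 + r ^ 2 / ((k : ℝ) + 1 / 2) ^ 2) :=
            Finset.prod_le_prod (fun k _ => by have := hann k; positivity)
              (fun k _ => by have := hab k; linarith)
        _ ≤ Real.cosh (Real.pi * r) := prod_le_cosh r hr _
    have hG' : ‖(∏ k ∈ Finset.range (2 * p), f k)‖ ≥ 0 := norm_nonneg _
    calc ‖(∏ k ∈ Finset.range (2 * p), f k)‖ *
          ‖(1 - ∏ i ∈ Finset.range m, f (2 * p + i))‖
        ≤ (∏ k ∈ Finset.range (2 * p), (1 + a k)) *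
          ((∏ i ∈ Finset.range m, (1 + a (2 * p + i))) - 1) := by
          apply mul_le_mul hGle habs1 (norm_nonneg _) hPnn
      _ ≤ (∏ k ∈ Finset.range (2 * p), (1 + a k)) *
          ((∏ i ∈ Finset.range m, (1 + a (2 * p + i))) * ∑ i ∈ Finset.range m, a (2 * p + i)) :=
          mul_le_mul_of_nonneg_left hTS hPnn
      _ = ((∏ k ∈ Finset.range (2 * p), (1 + a k)) *
          (∏ i ∈ Finset.range m, (1 + a (2 * p + i)))) * ∑ i ∈ Finset.range m, a (2 * p + i) := by
          ring
      _ ≤ Real.cosh (Real.pi * r) * (r ^ 2 / (2 * (p : ℝ))) := by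
          rw [hPT]
          exact mul_le_mul hPTle hsumS hSnn hcoshnn
  -- take the limit
  have hseq : Tendsto (fun n : ℕ =>
      ‖((∏ k ∈ Finset.range (2 * p), f k) - ∏ k ∈ Finset.range n, f k)‖) atTop
      (𝓝 (‖((∏ k ∈ Finset.range (2 * p), f k) - ∏' k, f k)‖)) :=
    (continuous_norm.tendsto _).comp (tendsto_const_nhds.sub hg)
  have hle : ‖((∏ k ∈ Finset.range (2 * p), f k) - ∏' k, f k)‖
      ≤ Real.cosh (Real.pi * r) * (r ^ 2 / (2 * (p : ℝ))) := by
    refine le_of_tendsto hseq ?_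
    rw [eventually_atTop]
    exact ⟨2 * p, fun n hn => by
      obtain ⟨m, rfl⟩ := Nat.exists_eq_add_of_le hn
      exact key m⟩
  have hfinal : Real.cosh (Real.pi * r) * (r ^ 2 / (2 * (p : ℝ)))
      ≤ r ^ 2 * Real.cosh (Real.pi * r) / (p : ℝ) * 1 := by
    rw [mul_one, show Real.cosh (Real.pi * r) * (r ^ 2 / (2 * (p : ℝ)))
      = r ^ 2 * Real.cosh (Real.pi * r) / (2 * (p : ℝ)) by ring]
    apply div_le_div_of_nonneg_left (by positivity) hpr
    linarith
  exact le_trans hle hfinal
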